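/- Let ⪰ be a complete binary relation on a mixture-closed set C of Anscombe–Aumann acts, and suppose u : S × O → ℝ and u' : S × O → ℝ each singly represent ⪰, i.e., for all a, b ∈ C, a ⪰ b iff ∑_{s,o} u(s,o)·a(s)(o) ≥ ∑_{s,o} u(s,o)·b(s)(o), and likewise for u'. Then there exist real numbers α ≥ 0 and β such that for all a ∈ C, ∑_{s,o} u'(s,o)·a(s)(o) = α·∑_{s,o} u(s,o)·a(s)(o) + β; that is, the expected-utility functional is unique up to affine transformations. -/
import Mathlib


/-- An Anscombe–Aumann act: a map assigning to each state a probability vector over outcomes. -/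
def IsAAAct {S O : Type*} [Fintype O] (a : S → O → ℝ) : Prop :=
  ∀ s, (∀ o, 0 ≤ a s o) ∧ (∑ o, a s o = 1)

/-- Linearity of the expected-utility sum under mixtures. -/
lemma eu_mix_lin {S O : Type*} [Fintype S] [Fintype O] (u x y : S → O → ℝ) (r : ℝ) :
    ∑ s, ∑ o, u s o * (r • x + (1 - r) • y) s o
      = r * (∑ s, ∑ o, u s o * x s o) + (1 - r) * (∑ s, ∑ o, u s o * y s o) := by
  simp only [Pi.add_apply, Pi.smul_apply, smul_eq_mul, Finset.mul_sum]
  rw [← Finset.sum_add_distrib]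
  refine Finset.sum_congr rfl fun s _ => ?_
  rw [← Finset.sum_add_distrib]
  exact Finset.sum_congr rfl fun o _ => by ring

/-- Uniqueness of the expected-utility functional up to positive affine transformations:
if `u` and `u'` each singly represent a complete relation `R` on a mixture-closed set
of AA acts, then the two expected-utility functionals are affinely related. -/
theorem singleUtilityRep_unique_up_to_affine
    {S O : Type*} [Fintype S] [Fintype O] [Nonempty S] [Nonempty O]
    (C : Set (S → O → ℝ)) (R : (S → O → ℝ) → (S → O → ℝ) → Prop)
    (hAA : ∀ a ∈ C, IsAAAct a)
    (hmix : ∀ a ∈ C, ∀ b ∈ C, ∀ r : ℝ, 0 ≤ r → r ≤ 1 → r • a + (1 - r) • b ∈ C)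
    (hcomp : ∀ a ∈ C, ∀ b ∈ C, R a b ∨ R b a)
    (u u' : S → O → ℝ)
    (hu : ∀ a ∈ C, ∀ b ∈ C,
      (R a b ↔ ∑ s, ∑ o, u s o * a s o ≥ ∑ s, ∑ o, u s o * b s o))
    (hu' : ∀ a ∈ C, ∀ b ∈ C,
      (R a b ↔ ∑ s, ∑ o, u' s o * a s o ≥ ∑ s, ∑ o, u' s o * b s o)) :
    ∃ α β : ℝ, 0 ≤ α ∧ ∀ a ∈ C,
      ∑ s, ∑ o, u' s o * a s o = α * (∑ s, ∑ o, u s o * a s o) + β := by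
  set U : (S → O → ℝ) → ℝ := fun a => ∑ s, ∑ o, u s o * a s o with hUdef
  set U' : (S → O → ℝ) → ℝ := fun a => ∑ s, ∑ o, u' s o * a s o with hU'def
  have agree : ∀ a ∈ C, ∀ b ∈ C, (U a ≥ U b ↔ U' a ≥ U' b) := fun a ha b hb =>
    ((hu a ha b hb).symm.trans (hu' a ha b hb))
  have eqUU : ∀ a ∈ C, ∀ b ∈ C, U a = U b → U' a = U' b := fun a ha b hb h =>
    le_antisymm ((agree b hb a ha).mp h.le) ((agree a ha b hb).mp h.ge)
  have between : ∀ x ∈ C, ∀ y ∈ C, ∀ z ∈ C, ∀ t : ℝ, 0 ≤ t → t ≤ 1 →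
      U y = t * U x + (1 - t) * U z → U' y = t * U' x + (1 - t) * U' z := by
    intro x hx y hy z hz t ht0 ht1 h
    have hm : t • x + (1 - t) • z ∈ C := hmix x hx z hz t ht0 ht1
    have h1 : U (t • x + (1 - t) • z) = U y := by
      rw [hUdef]; simp only []; rw [eu_mix_lin]; exact h.symm
    have h2 := eqUU _ hm y hy h1
    rw [← h2, hU'def]; simp only []; rw [eu_mix_lin]
  by_cases hne : ∃ b ∈ C, ∃ c ∈ C, U c < U b
  · obtain ⟨b, hb, c, hc, hbc⟩ := hne
    have hD : (0:ℝ) < U b - U c := sub_pos.mpr hbc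
    have hDne : U b - U c ≠ 0 := ne_of_gt hD
    refine ⟨(U' b - U' c) / (U b - U c),
      U' c - (U' b - U' c) / (U b - U c) * U c, ?_, ?_⟩
    · apply div_nonneg _ hD.le
      have : U' b ≥ U' c := (agree b hb c hc).mp hbc.le
      linarith
    · intro a ha
      show U' a = _
      have key : U' a * (U b - U c)
          = (U' b - U' c) * U a + (U' c * U b - U' b * U c) := by
        rcases le_or_gt (U a) (U b) with hab | hab
        · rcases le_or_gt (U c) (U a) with hca | hca
          · -- U c ≤ U a ≤ U b
            have ht0 : 0 ≤ (U a - U c) / (U b - U c) :=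
              div_nonneg (by linarith) hD.le
            have ht1 : (U a - U c) / (U b - U c) ≤ 1 :=
              (div_le_one hD).mpr (by linarith)
            have h := between b hb a ha c hc _ ht0 ht1 (by field_simp; ring)
            field_simp at h
            linarith [h]
          · -- U a < U c ≤ U b : c between b and a
            have hF : (0:ℝ) < U b - U a := by linarith
            have ht0 : 0 ≤ (U c - U a) / (U b - U a) :=
              div_nonneg (by linarith) hF.le
            have ht1 : (U c - U a) / (U b - U a) ≤ 1 :=
              (div_le_one hF).mpr (by linarith)
            have h := between b hb c hc a ha _ ht0 ht1 (by field_simp; ring)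
            field_simp at h
            nlinarith [h]
        · -- U b < U a : b between a and c
          have hE : (0:ℝ) < U a - U c := by linarith
          have ht0 : 0 ≤ (U b - U c) / (U a - U c) :=
            div_nonneg hD.le hE.le
          have ht1 : (U b - U c) / (U a - U c) ≤ 1 :=
            (div_le_one hE).mpr (by linarith)
          have h := between a ha b hb c hc _ ht0 ht1 (by field_simp; ring)
          field_simp at h
          nlinarith [h]
      field_simp
      linarith [key]
  · push_neg at hne
    by_cases hC : ∃ a, a ∈ C
    · obtain ⟨a0, ha0⟩ := hC
      refine ⟨1, U' a0 - U a0, zero_le_one, ?_⟩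
      intro a ha
      show U' a = 1 * U a + (U' a0 - U a0)
      have h1 : U a = U a0 := le_antisymm (hne a ha a0 ha0) (hne a0 ha0 a ha)
      have h2 : U' a = U' a0 := eqUU a ha a0 ha0 h1
      rw [h1, h2]; ring
    · push_neg at hC
      exact ⟨0, 0, le_rfl, fun a ha => absurd ha (hC a)⟩
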